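/- Let X be a countable collection of languages, K ∈ X, and τ = τ(X, K) its truth index. For every index-based generation algorithm f that guarantees validity for X and every ε > 0, there exists an enumeration E of K such that μ_up(L_{i_t}, K) ≤ τ + ε for infinitely many steps t, where i_t = f(w_1, …, w_t). -/

import Mathlib

/-- The finite prefix `[E 0, …, E t]` of the adversary's enumeration. -/
def epref (E : ℕ → ℕ) (t : ℕ) : List ℕ := (List.range (t + 1)).map E

/-- `E` is an enumeration of the language `K`. -/
def IsEnum (E : ℕ → ℕ) (K : Set ℕ) : Prop := Function.Injective E ∧ Set.range E = K

/-- The upper density of `L` in the infinite set `K`: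
`limsup_{N→∞} |L ∩ {k_1,…,k_N}| / N`, where `k_1 < k_2 < ⋯` lists `K` in
increasing order (`Nat.nth (· ∈ K)` gives this listing, 0-indexed). -/
noncomputable def upperDensity (L K : Set ℕ) : ℝ :=
  Filter.limsup
    (fun N : ℕ => ((Set.ncard {n : ℕ | n < N ∧ Nat.nth (· ∈ K) n ∈ L}) : ℝ) / N)
    Filter.atTop

/-- The sets `B_k` associated with a sequence of languages:
`B_0 = ⋂_i Λ i` and `B_k = (⋂_{i ≥ k} Λ i) \ (B_0 ∪ ⋯ ∪ B_{k-1})`. -/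
def towerB (Λ : ℕ → Set ℕ) : ℕ → Set ℕ
  | k => {w | ∀ i, k ≤ i → w ∈ Λ i} \ {w | ∃ m, ∃ _ : m < k, w ∈ towerB Λ m}

/-- `(Λ 0, Λ 1, …)` is an infinite perfect tower of (pairwise distinct, infinite)
languages with terminal language `K`. -/
structure IsPerfectTower (Λ : ℕ → Set ℕ) (K : Set ℕ) : Prop where
  injective : Function.Injective Λ
  infinite : ∀ j, (Λ j).Infinite
  proper : ∀ j, Λ j ⊂ K
  nonempty : ∀ j, (towerB Λ j).Nonempty
  complete : (⋃ j, towerB Λ j) = K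

/-- The index-based generation algorithm `f` guarantees validity for the collection
`L`: on any enumeration of any member of the collection, its guesses are eventually
always subsets of the enumerated language. -/
def GuaranteesValidity (L : ℕ → Set ℕ) (f : List ℕ → ℕ) : Prop :=
  ∀ (i : ℕ) (E : ℕ → ℕ), IsEnum E (L i) →
    ∃ t0 : ℕ, ∀ t ≥ t0, L (f (epref E t)) ⊆ L i

/- The truth index `τ(X, K)` for the collection `L` and true language `K = L z`:
the infimum of the set `D` of `δ ∈ [0,1]` for which there is an infinite perfect
tower of languages from the collection with terminal language `K` all of whose
languages have upper density at most `δ` in `K`; it equals `1` when `D` is empty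
(in particular when no such tower exists at all). -/
open Classical in
noncomputable def truthIndex (L : ℕ → Set ℕ) (z : ℕ) : ℝ :=
  if ({δ : ℝ | δ ∈ Set.Icc (0 : ℝ) 1 ∧
        ∃ Λ : ℕ → Set ℕ, (∀ j, ∃ i, Λ j = L i) ∧ IsPerfectTower Λ (L z) ∧
          ∀ j, upperDensity (Λ j) (L z) ≤ δ}).Nonempty
  then sInf {δ : ℝ | δ ∈ Set.Icc (0 : ℝ) 1 ∧
        ∃ Λ : ℕ → Set ℕ, (∀ j, ∃ i, Λ j = L i) ∧ IsPerfectTower Λ (L z) ∧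
          ∀ j, upperDensity (Λ j) (L z) ≤ δ}
  else 1

open Filter in
lemma dens_term_bounds (L K : Set ℕ) (N : ℕ) :
    0 ≤ ((Set.ncard {n : ℕ | n < N ∧ Nat.nth (· ∈ K) n ∈ L}) : ℝ) / N ∧
    ((Set.ncard {n : ℕ | n < N ∧ Nat.nth (· ∈ K) n ∈ L}) : ℝ) / N ≤ 1 := by
  constructor
  · positivity
  · rcases Nat.eq_zero_or_pos N with h | h
    · simp [h]
    · rw [div_le_one (by positivity)]
      norm_cast
      calc Set.ncard {n : ℕ | n < N ∧ Nat.nth (· ∈ K) n ∈ L}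
          ≤ Set.ncard (Set.Iio N) := by
            refine Set.ncard_le_ncard (fun n hn => hn.1) ?_
            rw [← Finset.coe_Iio]; exact (Finset.Iio N).finite_toSet
        _ = N := by rw [← Finset.coe_Iio, Set.ncard_coe_finset, Nat.card_Iio]

open Filter in
lemma upperDensity_le_one (L K : Set ℕ) : upperDensity L K ≤ 1 := by
  refine limsup_le_of_le (isCoboundedUnder_le_of_le _ fun N => (dens_term_bounds L K N).1) ?_
  exact Eventually.of_forall fun N => (dens_term_bounds L K N).2

open Filter in
lemma upperDensity_mono {L L' : Set ℕ} (K : Set ℕ) (h : L ⊆ L') :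
    upperDensity L K ≤ upperDensity L' K := by
  refine limsup_le_limsup (Eventually.of_forall fun N => ?_)
    (isCoboundedUnder_le_of_le _ fun N => (dens_term_bounds L K N).1)
    ⟨1, Filter.eventually_map.2 (Eventually.of_forall fun N : ℕ => (dens_term_bounds L' K N).2)⟩
  rcases Nat.eq_zero_or_pos N with hN | hN
  · simp [hN]
  · have hsub : {n : ℕ | n < N ∧ Nat.nth (· ∈ K) n ∈ L} ⊆
        {n : ℕ | n < N ∧ Nat.nth (· ∈ K) n ∈ L'} := fun n hn => ⟨hn.1, h hn.2⟩
    have hfin : {n : ℕ | n < N ∧ Nat.nth (· ∈ K) n ∈ L'}.Finite :=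
      (Set.finite_Iio N).subset fun n hn => hn.1
    have hle := Set.ncard_le_ncard hsub hfin
    have hN' : (0 : ℝ) < N := by exact_mod_cast hN
    exact div_le_div_of_nonneg_right (by exact_mod_cast hle) hN'.le

/-- membership in `towerB Λ j` gives membership in all `Λ i`, `i ≥ j`. -/
lemma mem_of_mem_towerB {Λ : ℕ → Set ℕ} {w j i : ℕ} (h : w ∈ towerB Λ j) (hij : j ≤ i) :
    w ∈ Λ i := by
  rw [towerB] at h; exact h.1 i hij

lemma exists_common_index (Λ : ℕ → Set ℕ) (K : Set ℕ) (hc : (⋃ j, towerB Λ j) = K)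
    (p : List ℕ) (hp : ∀ x ∈ p, x ∈ K) : ∃ i, ∀ x ∈ p, ∀ i' ≥ i, x ∈ Λ i' := by
  induction p with
  | nil => exact ⟨0, by simp⟩
  | cons a q ih =>
    obtain ⟨i, hi⟩ := ih (fun x hx => hp x (List.mem_cons_of_mem _ hx))
    have ha : a ∈ ⋃ j, towerB Λ j := hc ▸ hp a List.mem_cons_self
    obtain ⟨j, hj⟩ := Set.mem_iUnion.1 ha
    refine ⟨max i j, ?_⟩
    intro x hx i' hi'
    rcases List.mem_cons.1 hx with rfl | hx'
    · exact mem_of_mem_towerB hj (le_trans (le_max_right i j) hi')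
    · exact hi x hx' i' (le_trans (le_max_left i j) hi')

/-- Extend a nodup list inside an infinite set to a full enumeration of that set. -/
lemma exists_enum_extend (S : Set ℕ) (hS : S.Infinite) (p : List ℕ) (hp : p.Nodup)
    (hpS : ∀ x ∈ p, x ∈ S) :
    ∃ E : ℕ → ℕ, Function.Injective E ∧ Set.range E = S ∧
      ∀ (s : ℕ) (h : s < p.length), E s = p[s] := by
  set T : Set ℕ := S \ {x | x ∈ p} with hTdef
  have hT : T.Infinite := hS.diff p.finite_toSet
  have hT' : (setOf (· ∈ T)).Infinite := hT
  set E : ℕ → ℕ := fun t => if t < p.length then p.getD t 0 else Nat.nth (· ∈ T) (t - p.length)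
    with hEdef
  have hElt : ∀ (s : ℕ) (h : s < p.length), E s = p[s] := by
    intro s h
    rw [hEdef]
    simp only [if_pos h]
    exact List.getD_eq_getElem _ _ h
  have hEge : ∀ s : ℕ, ¬ s < p.length → E s = Nat.nth (· ∈ T) (s - p.length) := by
    intro s h
    rw [hEdef]
    simp only [if_neg h]
  refine ⟨E, ?_, ?_, hElt⟩
  · intro a b hab
    by_cases ha : a < p.length <;> by_cases hb : b < p.length
    · rw [hElt a ha, hElt b hb] at hab
      exact (List.Nodup.getElem_inj_iff hp).1 hab
    · rw [hElt a ha, hEge b hb] at hab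
      have hmem := Nat.nth_mem_of_infinite hT' (b - p.length)
      rw [← hab] at hmem
      exact absurd (List.getElem_mem ha) hmem.2
    · rw [hEge a ha, hElt b hb] at hab
      have hmem := Nat.nth_mem_of_infinite hT' (a - p.length)
      rw [hab] at hmem
      exact absurd (List.getElem_mem hb) hmem.2
    · rw [hEge a ha, hEge b hb] at hab
      have := Nat.nth_injective hT' hab
      omega
  · ext x
    constructor
    · rintro ⟨s, rfl⟩
      by_cases hs : s < p.length
      · rw [hElt s hs]
        exact hpS _ (List.getElem_mem hs)
      · rw [hEge s hs]
        exact (Nat.nth_mem_of_infinite hT' (s - p.length)).1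
    · intro hx
      by_cases hxp : x ∈ p
      · obtain ⟨i, hi, rfl⟩ := List.mem_iff_getElem.1 hxp
        exact ⟨i, hElt i hi⟩
      · have hxT : x ∈ setOf (· ∈ T) := ⟨hx, hxp⟩
        have hxT : x ∈ Set.range (Nat.nth (· ∈ T)) := by rwa [Nat.range_nth_of_infinite hT']
        obtain ⟨m, rfl⟩ := hxT
        refine ⟨p.length + m, ?_⟩
        rw [hEge (p.length + m) (by omega)]
        congr 1
        omega

/-- The key step: extend the current prefix so that the algorithm makes a
low-density guess at some new time, and the `n`-th element of `K` gets included. -/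
lemma step_lemma (L : ℕ → Set ℕ) (z : ℕ) (hK : (L z).Infinite)
    (f : List ℕ → ℕ) (hf : GuaranteesValidity L f)
    (Λ : ℕ → Set ℕ) (hΛL : ∀ j, ∃ i, Λ j = L i) (hTow : IsPerfectTower Λ (L z))
    (δ : ℝ) (hdens : ∀ j, upperDensity (Λ j) (L z) ≤ δ)
    (n : ℕ) (p : List ℕ) (hp : p.Nodup ∧ ∀ x ∈ p, x ∈ L z) :
    ∃ q : List ℕ, (q.Nodup ∧ ∀ x ∈ q, x ∈ L z) ∧
      (p <+: q ∧ Nat.nth (· ∈ L z) n ∈ q ∧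
        ∃ t, p.length ≤ t ∧ t < q.length ∧
          upperDensity (L (f (q.take (t + 1)))) (L z) ≤ δ) := by
  obtain ⟨i, hi⟩ := exists_common_index Λ (L z) hTow.complete p hp.2
  obtain ⟨E', hEinj, hErng, hEmatch⟩ :=
    exists_enum_extend (Λ i) (hTow.infinite i) p hp.1 (fun x hx => hi x hx i le_rfl)
  obtain ⟨iz, hiz⟩ := hΛL i
  obtain ⟨t0, ht0⟩ := hf iz E' ⟨hEinj, by rw [hErng, hiz]⟩
  set t := max t0 p.length with htdef
  have hsub : L (f (epref E' t)) ⊆ Λ i := by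
    rw [hiz]; exact ht0 t (le_max_left _ _)
  have hd : upperDensity (L (f (epref E' t))) (L z) ≤ δ :=
    le_trans (upperDensity_mono (L z) hsub) (hdens i)
  set q0 : List ℕ := epref E' t with hq0def
  have hq0len : q0.length = t + 1 := by simp [hq0def, epref]
  have hq0nodup : q0.Nodup := (List.nodup_range (n := t + 1)).map hEinj
  have hq0mem : ∀ x ∈ q0, x ∈ L z := by
    intro x hx
    simp only [hq0def, epref, List.mem_map] at hx
    obtain ⟨s, _, rfl⟩ := hx
    exact (hTow.proper i).subset (hErng ▸ Set.mem_range_self s)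
  have hpq0 : p <+: q0 := by
    refine List.prefix_iff_eq_take.2 ?_
    apply List.ext_getElem
    · rw [List.length_take, hq0len]; omega
    · intro s hs hs'
      rw [List.getElem_take]
      simp only [hq0def, epref, List.getElem_map, List.getElem_range]
      exact (hEmatch s hs).symm
  set k := Nat.nth (· ∈ L z) n with hkdef
  have hkK : k ∈ L z := Nat.nth_mem_of_infinite hK n
  by_cases hkq : k ∈ q0
  · refine ⟨q0, ⟨hq0nodup, hq0mem⟩, hpq0, hkq, t, le_max_right _ _, by omega, ?_⟩
    have : q0.take (t + 1) = q0 := List.take_of_length_le (by omega)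
    rw [this]; exact hd
  · refine ⟨q0 ++ [k], ⟨?_, ?_⟩, hpq0.trans (List.prefix_append _ _), by simp, t,
      le_max_right _ _, by simp only [List.length_append, List.length_singleton, hq0len]; omega, ?_⟩
    · simp [List.nodup_append, hq0nodup, hkq]; rintro a ha rfl; exact hkq ha
    · intro x hx
      rcases List.mem_append.1 hx with h | h
      · exact hq0mem x h
      · simp at h; subst h; exact hkK
    · have : (q0 ++ [k]).take (t + 1) = q0 := by
        rw [List.take_append_of_le_length (by omega), List.take_of_length_le (by omega)]
      rw [this]; exact hd

/-- A recursion-with-invariant helper. -/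
lemma rec_exists {α : Type*} (P : α → Prop) (a0 : α) (h0 : P a0)
    (R : ℕ → α → α → Prop) (hstep : ∀ n a, P a → ∃ b, P b ∧ R n a b) :
    ∃ g : ℕ → α, g 0 = a0 ∧ ∀ n, P (g n) ∧ R n (g n) (g (n + 1)) := by
  choose F hF1 hF2 using hstep
  let g' : ℕ → {a : α // P a} := fun n =>
    Nat.rec ⟨a0, h0⟩ (fun m p => ⟨F m p.1 p.2, hF1 m p.1 p.2⟩) n
  refine ⟨fun n => (g' n).1, rfl, fun n => ⟨(g' n).2, ?_⟩⟩
  exact hF2 n (g' n).1 (g' n).2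

/-- For every valid index-based generation algorithm `f` and every `ε > 0` there is
an enumeration of `K = L z` on which `f` guesses a language of upper density at
most `τ + ε` in `K` at infinitely many steps, where `τ` is the truth index. -/
theorem stmt8 (L : ℕ → Set ℕ) (hinf : ∀ i, (L i).Infinite) (z : ℕ)
    (f : List ℕ → ℕ) (hf : GuaranteesValidity L f) (ε : ℝ) (hε : 0 < ε) :
    ∃ E : ℕ → ℕ, IsEnum E (L z) ∧
      {t : ℕ | upperDensity (L (f (epref E t))) (L z) ≤ truthIndex L z + ε}.Infinite := by
  have hK : (L z).Infinite := hinf z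
  have hK' : (setOf (· ∈ L z)).Infinite := hK
  by_cases h1 : (1 : ℝ) ≤ truthIndex L z + ε
  · refine ⟨Nat.nth (· ∈ L z), ⟨Nat.nth_injective hK', ?_⟩, ?_⟩
    · exact Nat.range_nth_of_infinite hK'
    · have : ∀ t : ℕ, t ∈ {t : ℕ | upperDensity (L (f (epref (Nat.nth (· ∈ L z)) t))) (L z) ≤
          truthIndex L z + ε} := fun t => le_trans (upperDensity_le_one _ _) h1
      rw [Set.eq_univ_of_forall this]
      exact Set.infinite_univ
  · -- D is nonempty and τ = sInf D
    set D := {δ : ℝ | δ ∈ Set.Icc (0 : ℝ) 1 ∧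
        ∃ Λ : ℕ → Set ℕ, (∀ j, ∃ i, Λ j = L i) ∧ IsPerfectTower Λ (L z) ∧
          ∀ j, upperDensity (Λ j) (L z) ≤ δ} with hDdef
    have hDne : D.Nonempty := by
      by_contra h
      rw [truthIndex] at h1
      rw [if_neg h] at h1
      exact h1 (by linarith)
    have hτ : truthIndex L z = sInf D := by rw [truthIndex, if_pos hDne]
    obtain ⟨δ, hδD, hδlt⟩ : ∃ δ ∈ D, δ < truthIndex L z + ε := by
      by_contra h
      push_neg at h
      have : truthIndex L z + ε ≤ sInf D := le_csInf hDne h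
      rw [← hτ] at this; linarith
    obtain ⟨⟨hδ0, hδ1⟩, Λ, hΛL, hTow, hdens⟩ := hδD
    -- build the adversarial sequence of prefixes
    obtain ⟨g, hg0, hg⟩ := rec_exists (fun p : List ℕ => p.Nodup ∧ ∀ x ∈ p, x ∈ L z) [] (by simp)
      (fun n p q => p <+: q ∧ Nat.nth (· ∈ L z) n ∈ q ∧
        ∃ t, p.length ≤ t ∧ t < q.length ∧
          upperDensity (L (f (q.take (t + 1)))) (L z) ≤ δ)
      (step_lemma L z hK f hf Λ hΛL hTow δ hdens)
    have hmono : ∀ m n, m ≤ n → g m <+: g n := by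
      intro m n hmn
      induction n, hmn using Nat.le_induction with
      | base => exact List.prefix_refl _
      | succ n _ ih => exact ih.trans (hg n).2.1
    have hgrow : ∀ n, (g n).length < (g (n + 1)).length := by
      intro n
      obtain ⟨t, ht1, ht2, _⟩ := (hg n).2.2.2
      omega
    have hlen : ∀ n, n ≤ (g n).length := by
      intro n
      induction n with
      | zero => omega
      | succ m ih => have := hgrow m; omega
    -- the enumeration
    set E : ℕ → ℕ := fun s => (g (s + 1)).getD s 0 with hEdef
    have hEval : ∀ (m s : ℕ) (hs : s < (g m).length), (g m)[s] = E s := by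
      intro m s hs
      have hsb : s < (g (s + 1)).length := lt_of_lt_of_le (Nat.lt_succ_self s) (hlen (s + 1))
      have : E s = (g (s + 1))[s] := List.getD_eq_getElem _ _ hsb
      rw [this]
      rcases le_total m (s + 1) with h | h
      · exact (hmono m (s + 1) h).getElem hs
      · exact ((hmono (s + 1) m h).getElem hsb).symm
    have hEinj : Function.Injective E := by
      intro a b hab
      by_contra hne
      wlog hab' : a < b generalizing a b
      · exact this hab.symm (Ne.symm hne) (by omega)
      have hb : b < (g (b + 1)).length := lt_of_lt_of_le (Nat.lt_succ_self b) (hlen (b + 1))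
      have ha : a < (g (b + 1)).length := by omega
      rw [← hEval (b + 1) a ha, ← hEval (b + 1) b hb] at hab
      exact hne ((List.Nodup.getElem_inj_iff (hg (b + 1)).1.1).1 hab)
    have hErng : Set.range E = L z := by
      ext x
      constructor
      · rintro ⟨s, rfl⟩
        have hsb : s < (g (s + 1)).length := lt_of_lt_of_le (Nat.lt_succ_self s) (hlen (s + 1))
        rw [← hEval (s + 1) s hsb]
        exact (hg (s + 1)).1.2 _ (List.getElem_mem hsb)
      · intro hx
        have : x ∈ Set.range (Nat.nth (· ∈ L z)) := by
          rw [Nat.range_nth_of_infinite hK']; exact hx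
        obtain ⟨n, rfl⟩ := this
        have hmem : Nat.nth (· ∈ L z) n ∈ g (n + 1) := (hg n).2.2.1
        obtain ⟨s, hs, hsx⟩ := List.mem_iff_getElem.1 hmem
        exact ⟨s, by rw [← hEval (n + 1) s hs, hsx]⟩
    -- the witnesses
    choose t htle htlt htd using fun n => (hg n).2.2.2
    have hts : StrictMono t := by
      apply strictMono_nat_of_lt_succ
      intro n
      have h1 := htlt n
      have h2 := htle (n + 1)
      omega
    have hwit : ∀ n, t n ∈ {s : ℕ | upperDensity (L (f (epref E s))) (L z) ≤
        truthIndex L z + ε} := by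
      intro n
      have hq : epref E (t n) = (g (n + 1)).take (t n + 1) := by
        apply List.ext_getElem
        · have := htlt n
          simp [epref, List.length_take]
          omega
        · intro s hs hs'
          simp only [epref, List.getElem_map, List.getElem_range, List.getElem_take]
          have hsl : s < (g (n + 1)).length := by
            have := htlt n
            simp [epref] at hs
            omega
          exact (hEval (n + 1) s hsl).symm
      rw [Set.mem_setOf_eq, hq]
      exact le_trans (htd n) (le_of_lt hδlt)
    exact ⟨E, ⟨hEinj, hErng⟩, Set.infinite_of_injective_forall_mem hts.injective hwit⟩
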